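/- arXiv:1406.6130 — 2 statements merged into one kernel-verified Lean document; each statement's English description precedes it below -/
import Mathlib

section
/- Let X be a finite nonempty set and F : Δ_X → ℝ a convex function differentiable on Δ_X, with entropic dual F*(v) := sup_{p∈Δ_X} ⟨p, v⟩ − F(p). Then the loss ℓ^F : Δ_X → ℝ^X defined by ℓ^F(p) := F*(∇F(p))𝟙 − ∇F(p) is proper: for all p, p̂ ∈ Δ_X, ⟨p, ℓ^F(p̂)⟩ ≥ ⟨p, ℓ^F(p)⟩. -/
open Finset

/-- The probability simplex on a finite type `Θ`. -/
def probSimplex (Θ : Type*) [Fintype Θ] : Set (Θ → ℝ) :=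
  {μ | (∀ θ, 0 ≤ μ θ) ∧ ∑ θ, μ θ = 1}

/-- The relative interior of the probability simplex. -/
def probRelint (Θ : Type*) [Fintype Θ] : Set (Θ → ℝ) :=
  {μ | (∀ θ, 0 < μ θ) ∧ ∑ θ, μ θ = 1}

/-- Standard inner product on `ℝ^Θ`. -/
noncomputable def ip {Θ : Type*} [Fintype Θ] (μ v : Θ → ℝ) : ℝ := ∑ θ, μ θ * v θ

/-- Entropic dual: `Φ*(v) = sup_{μ ∈ Δ_Θ} ⟨μ, v⟩ - Φ(μ)`. -/
noncomputable def edual {Θ : Type*} [Fintype Θ] (Φ : (Θ → ℝ) → ℝ) (v : Θ → ℝ) : ℝ :=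
  sSup ((fun μ => ip μ v - Φ μ) '' probSimplex Θ)

/-- The continuous linear map `v ↦ ⟨w, v⟩` representing a gradient vector `w`. -/
noncomputable def pairCLM {Θ : Type*} [Fintype Θ] (w : Θ → ℝ) : (Θ → ℝ) →L[ℝ] ℝ :=
  ∑ θ, w θ • ContinuousLinearMap.proj θ

/-- Bregman divergence of `Φ` with gradient map `g`. -/
noncomputable def breg {Θ : Type*} [Fintype Θ] (Φ : (Θ → ℝ) → ℝ)
    (g : (Θ → ℝ) → Θ → ℝ) (μ μ' : Θ → ℝ) : ℝ :=
  Φ μ - Φ μ' - ip (μ - μ') (g μ')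


/-- The proper loss associated to an entropy `F` (Savage representation):
`ℓ^F(p) = F*(∇F(p))𝟙 − ∇F(p)`. -/
noncomputable def properLoss {X : Type*} [Fintype X]
    (F : (X → ℝ) → ℝ) (gF : (X → ℝ) → X → ℝ) (p : X → ℝ) : X → ℝ :=
  fun x => edual F (gF p) - gF p x

open Filter Topology in
lemma grad_ineq {E : Type*} [NormedAddCommGroup E] [NormedSpace ℝ E]
    {s : Set E} {F : E → ℝ} (hconv : ConvexOn ℝ s F) {q μ : E}
    (hq : q ∈ s) (hμ : μ ∈ s) {L : E →L[ℝ] ℝ} (hd : HasFDerivAt F L q) :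
    L (μ - q) ≤ F μ - F q := by
  set h : ℝ → ℝ := fun t => F (q + t • (μ - q)) with hh
  have hderiv : HasDerivAt h (L (μ - q)) 0 := by
    have hpath : HasDerivAt (fun t : ℝ => q + t • (μ - q)) (μ - q) 0 := by
      simpa using ((hasDerivAt_id (0:ℝ)).smul_const (μ - q)).const_add q
    have hd' : HasFDerivAt F L ((fun t : ℝ => q + t • (μ - q)) 0) := by simpa using hd
    exact hd'.comp_hasDerivAt 0 hpath
  have slope_le : ∀ t ∈ Set.Ioc (0:ℝ) 1, slope h 0 t ≤ F μ - F q := by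
    intro t ht
    have h0 : h 0 = F q := by simp [hh]
    have hcomb : q + t • (μ - q) = (1 - t) • q + t • μ := by
      rw [smul_sub, sub_smul]; module
    have hle : h t ≤ (1 - t) * F q + t * F μ := by
      rw [hh]; simp only
      rw [hcomb]
      exact hconv.2 hq hμ (by linarith [ht.2]) (le_of_lt ht.1) (by ring)
    have hts : h t - h 0 ≤ t * (F μ - F q) := by rw [h0]; nlinarith
    rw [slope_def_field, sub_zero, div_le_iff₀ ht.1]
    linarith
  have htend : Tendsto (slope h 0) (𝓝[>] 0) (𝓝 (L (μ - q))) :=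
    (hasDerivAt_iff_tendsto_slope.mp hderiv).mono_left
      (nhdsWithin_mono _ fun x hx => ne_of_gt hx)
  refine le_of_tendsto htend ?_
  filter_upwards [Ioc_mem_nhdsGT_of_mem (by constructor <;> norm_num : (0:ℝ) ∈ Set.Ico 0 1)]
    with t ht using slope_le t ht

lemma pairCLM_apply {Θ : Type*} [Fintype Θ] (w v : Θ → ℝ) :
    pairCLM w v = ip w v := by
  simp [pairCLM, ip, ContinuousLinearMap.sum_apply]

lemma ip_sub_left {Θ : Type*} [Fintype Θ] (a b v : Θ → ℝ) :
    ip (a - b) v = ip a v - ip b v := by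
  simp [ip, sub_mul, Finset.sum_sub_distrib]

/-- The sup in the entropic dual at a gradient point is attained there. -/
lemma edual_eq {X : Type*} [Fintype X]
    (F : (X → ℝ) → ℝ) (hconv : ConvexOn ℝ (probSimplex X) F)
    (gF : (X → ℝ) → X → ℝ)
    (hdiff : ∀ p ∈ probSimplex X, HasFDerivAt F (pairCLM (gF p)) p)
    (q : X → ℝ) (hq : q ∈ probSimplex X) :
    edual F (gF q) = ip q (gF q) - F q := by
  have hub : ∀ y ∈ (fun μ => ip μ (gF q) - F μ) '' probSimplex X, y ≤ ip q (gF q) - F q := by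
    rintro y ⟨μ, hμ, rfl⟩
    have hgi := grad_ineq hconv hq hμ (hdiff q hq)
    rw [pairCLM_apply] at hgi
    have : ip (μ - q) (gF q) ≤ F μ - F q := by
      rwa [show ip (μ - q) (gF q) = ip (gF q) (μ - q) by simp [ip, mul_comm]]
    rw [ip_sub_left] at this
    dsimp only
    linarith
  refine le_antisymm (csSup_le ⟨_, ⟨q, hq, rfl⟩⟩ hub) ?_
  exact le_csSup ⟨_, hub⟩ ⟨q, hq, rfl⟩

/-- The loss `ℓ^F` is proper. -/
theorem stmt_13 {X : Type*} [Fintype X] [Nonempty X]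
    (F : (X → ℝ) → ℝ)
    (hconv : ConvexOn ℝ (probSimplex X) F)
    (gF : (X → ℝ) → X → ℝ)
    (hdiff : ∀ p ∈ probSimplex X, HasFDerivAt F (pairCLM (gF p)) p)
    (p phat : X → ℝ) (hp : p ∈ probSimplex X) (hphat : phat ∈ probSimplex X) :
    ip p (properLoss F gF p) ≤ ip p (properLoss F gF phat) := by
  have hsum : ∑ x, p x = 1 := hp.2
  have key : ∀ q (hq : q ∈ probSimplex X),
      ip p (properLoss F gF q) = edual F (gF q) - ip p (gF q) := by
    intro q hq
    simp only [properLoss, ip, mul_sub, Finset.sum_sub_distrib, ← Finset.sum_mul, hsum, one_mul]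
  rw [key p hp, key phat hphat, edual_eq F hconv gF hdiff p hp,
    edual_eq F hconv gF hdiff phat hphat]
  -- Need: -F p ≤ (ip phat (gF phat) - F phat) - ip p (gF phat)
  have hgi := grad_ineq hconv hphat hp (hdiff phat hphat)
  rw [pairCLM_apply] at hgi
  have h1 : ip (gF phat) (p - phat) = ip p (gF phat) - ip phat (gF phat) := by
    rw [show ip (gF phat) (p - phat) = ip (p - phat) (gF phat) by simp [ip, mul_comm],
      ip_sub_left]
  rw [h1] at hgi
  linarith
end

section
/- Let Θ be a finite nonempty set, X a finite set with |X| ≥ 2, and 𝒜 a nonempty set. Let Φ be an entropy on Δ_Θ differentiable on relint(Δ_Θ) that fails strict convexity in the sense that there exist distinct μ*, μ'' ∈ relint(Δ_Θ) with D_Φ(μ*, μ'') = 0. Let ℓ : 𝒜 → ℝ^X be a loss such that for every p ∈ Δ_X the infimum inf_{a∈𝒜} ⟨p, ℓ(a)⟩ is attained and the Bayes risk L(p) := inf_{a∈𝒜} ⟨p, ℓ(a)⟩ is strictly concave on Δ_X. Then for every η > 0, ℓ is not η⁻¹Φ-mixable. -/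
open Finset

section Aux

variable {Θ : Type*} [Fintype Θ]

lemma probRelint_subset : probRelint Θ ⊆ probSimplex Θ :=
  fun _ h => ⟨fun θ => (h.1 θ).le, h.2⟩

lemma pairCLM_apply_s18 (w v : Θ → ℝ) : pairCLM w v = ∑ θ, w θ * v θ := by
  simp [pairCLM]

lemma ip_lower (μ v : Θ → ℝ) (hμ : μ ∈ probSimplex Θ) :
    -(∑ θ, |v θ|) ≤ ip μ v := by
  rw [ip, ← Finset.sum_neg_distrib]
  apply Finset.sum_le_sum
  intro θ _
  have h1 : μ θ ≤ 1 := by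
    have := Finset.single_le_sum (f := μ) (fun i _ => hμ.1 i) (Finset.mem_univ θ)
    linarith [hμ.2]
  have h2 := mul_le_mul_of_nonneg_left (neg_abs_le (v θ)) (hμ.1 θ)
  have h3 := mul_le_of_le_one_left (abs_nonneg (v θ)) h1
  nlinarith

lemma breg_self (Φ : (Θ → ℝ) → ℝ) (g : (Θ → ℝ) → Θ → ℝ) (μ : Θ → ℝ) :
    breg Φ g μ μ = 0 := by
  simp [breg, ip]

lemma breg_nonneg (Φ : (Θ → ℝ) → ℝ) (g : (Θ → ℝ) → Θ → ℝ)
    (hconv : ConvexOn ℝ (probSimplex Θ) Φ)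
    (μ : Θ → ℝ) (hμ : μ ∈ probRelint Θ)
    (hder : HasFDerivAt Φ (pairCLM (g μ)) μ)
    (μ' : Θ → ℝ) (hμ' : μ' ∈ probSimplex Θ) :
    0 ≤ breg Φ g μ' μ := by
  have hμm : μ ∈ probSimplex Θ := probRelint_subset hμ
  set φ : ℝ → ℝ := fun t => Φ (μ + t • (μ' - μ)) with hφ
  have h1 : HasDerivAt (fun t : ℝ => μ + t • (μ' - μ)) (μ' - μ) 0 := by
    simpa using ((hasDerivAt_id (0:ℝ)).smul_const (μ' - μ)).const_add μ
  have hder' : HasFDerivAt Φ (pairCLM (g μ)) ((fun t : ℝ => μ + t • (μ' - μ)) 0) := by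
    simpa using hder
  have hline : HasDerivAt φ (pairCLM (g μ) (μ' - μ)) 0 :=
    hder'.comp_hasDerivAt 0 h1
  rw [hasDerivAt_iff_tendsto_slope] at hline
  have hsub : Set.Ioi (0:ℝ) ⊆ {x : ℝ | x ≠ 0} := fun x hx => ne_of_gt hx
  have hT := hline.mono_left (nhdsWithin_mono 0 hsub)
  have hev : ∀ᶠ t in nhdsWithin (0:ℝ) (Set.Ioi 0), slope φ 0 t ≤ Φ μ' - Φ μ := by
    filter_upwards [Ioc_mem_nhdsGT_of_mem (Set.mem_Ico.2 ⟨le_refl (0:ℝ), one_pos⟩)]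
      with t ht
    have hcomb : μ + t • (μ' - μ) = (1 - t) • μ + t • μ' := by module
    have hc := hconv.2 hμm hμ' (by linarith [ht.2] : (0:ℝ) ≤ 1 - t) ht.1.le (by ring)
    rw [← hcomb] at hc
    have hslope : slope φ 0 t = (φ t - φ 0) / t := by
      rw [slope_def_field]; ring_nf
    rw [hslope, div_le_iff₀ ht.1]
    simp only [hφ]
    rw [show μ + (0:ℝ) • (μ' - μ) = μ by simp]
    simp only [smul_eq_mul] at hc
    nlinarith [hc]
  have hkey : pairCLM (g μ) (μ' - μ) ≤ Φ μ' - Φ μ := le_of_tendsto hT hev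
  have hip : ip (μ' - μ) (g μ) = pairCLM (g μ) (μ' - μ) := by
    rw [pairCLM_apply_s18, ip]
    exact Finset.sum_congr rfl (fun θ _ => mul_comm _ _)
  rw [breg, hip]
  linarith

end Aux

set_option maxHeartbeats 1000000 in
lemma keylemma {X 𝒜 : Type*} [Fintype X] [Nonempty 𝒜]
    (x1 x2 : X) (hx : x1 ≠ x2) (ℓ : 𝒜 → X → ℝ)
    (hatt : ∀ p ∈ probSimplex X, ∃ a : 𝒜, ∀ a' : 𝒜,
      ∑ x, p x * ℓ a x ≤ ∑ x, p x * ℓ a' x)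
    (hL : StrictConcaveOn ℝ (probSimplex X) (fun p => ⨅ a : 𝒜, ∑ x, p x * ℓ a x))
    (κ1 κ2 : ℝ) (hκ2 : 0 < κ2) (hκ1 : κ1 < 1) (hlt : κ2 < κ1)
    (hmix : ∀ a1 a2 : 𝒜, ∃ ahat : 𝒜, ∀ x : X,
      ℓ ahat x ≤ κ1 * ℓ a1 x + (1 - κ1) * ℓ a2 x ∧
      ℓ ahat x ≤ κ2 * ℓ a1 x + (1 - κ2) * ℓ a2 x) : False := by
  classical
  set r : ℝ → X → ℝ := fun t x =>
    t * (if x = x1 then 1 else 0) + (1 - t) * (if x = x2 then 1 else 0) with hr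
  have hrmem : ∀ t ∈ Set.Icc (0:ℝ) 1, r t ∈ probSimplex X := by
    intro t ht
    constructor
    · intro x
      simp only [hr]
      split_ifs <;> nlinarith [ht.1, ht.2]
    · simp only [hr]
      rw [Finset.sum_add_distrib, ← Finset.mul_sum, ← Finset.mul_sum]
      simp
  have hipr : ∀ (t : ℝ) (v : X → ℝ), ∑ x, r t x * v x = t * v x1 + (1 - t) * v x2 := by
    intro t v
    have h1 : ∀ x, r t x * v x =
        t * (if x = x1 then v x else 0) + (1 - t) * (if x = x2 then v x else 0) := by
      intro x; simp only [hr]; split_ifs <;> ring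
    rw [Finset.sum_congr rfl (fun x _ => h1 x), Finset.sum_add_distrib,
      ← Finset.mul_sum, ← Finset.mul_sum]
    simp
  set F : ℝ → ℝ := fun t => ⨅ a : 𝒜, ∑ x, r t x * ℓ a x with hF
  have hFle : ∀ t ∈ Set.Icc (0:ℝ) 1, ∀ a : 𝒜,
      F t ≤ t * ℓ a x1 + (1 - t) * ℓ a x2 := by
    intro t ht a
    obtain ⟨a0, ha0⟩ := hatt (r t) (hrmem t ht)
    have hbdd : BddBelow (Set.range fun a : 𝒜 => ∑ x, r t x * ℓ a x) :=
      ⟨∑ x, r t x * ℓ a0 x, by rintro y ⟨a', rfl⟩; exact ha0 a'⟩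
    have := ciInf_le hbdd a
    rwa [hipr t (ℓ a)] at this
  have hFeq : ∀ t ∈ Set.Icc (0:ℝ) 1, ∃ a : 𝒜,
      F t = t * ℓ a x1 + (1 - t) * ℓ a x2 := by
    intro t ht
    obtain ⟨a0, ha0⟩ := hatt (r t) (hrmem t ht)
    have hbdd : BddBelow (Set.range fun a : 𝒜 => ∑ x, r t x * ℓ a x) :=
      ⟨∑ x, r t x * ℓ a0 x, by rintro y ⟨a', rfl⟩; exact ha0 a'⟩
    refine ⟨a0, le_antisymm (by simpa [hipr t (ℓ a0)] using ciInf_le hbdd a0) ?_⟩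
    rw [← hipr t (ℓ a0)]
    exact le_ciInf ha0
  have hrne : ∀ {t u : ℝ}, t ≠ u → r t ≠ r u := by
    intro t u htu h
    apply htu
    have := congrFun h x1
    simpa [hr, hx] using this
  have hstrict : ∀ t ∈ Set.Icc (0:ℝ) 1, ∀ u ∈ Set.Icc (0:ℝ) 1, t ≠ u →
      (F t + F u) / 2 < F ((t + u) / 2) := by
    intro t ht u hu htu
    have h1 := hL.2 (hrmem t ht) (hrmem u hu) (hrne htu)
      (by norm_num : (0:ℝ) < 1/2) (by norm_num : (0:ℝ) < 1/2) (by norm_num)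
    have h2 : (1/2 : ℝ) • r t + (1/2 : ℝ) • r u = r ((t + u) / 2) := by
      funext x; simp only [hr, Pi.add_apply, Pi.smul_apply, smul_eq_mul]; ring
    rw [h2] at h1
    simp only [smul_eq_mul] at h1
    have : (F t + F u) / 2 = 1/2 * F t + 1/2 * F u := by ring
    rw [this]
    exact h1
  -- choose parameters
  set δ : ℝ := min ((κ1 - κ2) / 8) (1/4) with hδdef
  have hδpos : 0 < δ := lt_min (by linarith) (by norm_num)
  have hδle : δ ≤ 1/4 := min_le_right _ _
  have h8δ : 8 * δ ≤ κ1 - κ2 := by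
    have := min_le_left ((κ1 - κ2) / 8) (1/4); linarith
  have ht1 : (1/2 : ℝ) ∈ Set.Icc (0:ℝ) 1 := by norm_num
  have ht2 : (1/2 - δ : ℝ) ∈ Set.Icc (0:ℝ) 1 := by
    constructor <;> [linarith; linarith]
  clear_value δ
  clear hδdef
  obtain ⟨a1, ha1⟩ := hFeq (1/2) ht1
  obtain ⟨a2, ha2⟩ := hFeq (1/2 - δ) ht2
  clear_value F r
  set P := ℓ a1 x1 with hPd; set Q := ℓ a1 x2 with hQd
  set R := ℓ a2 x1 with hRd; set S := ℓ a2 x2 with hSd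
  have hne12 : (1/2 : ℝ) ≠ 1/2 - δ := by intro h; linarith
  -- strict gap 1 : F (1/2-δ) < (1/2-δ) P + (1/2+δ) Q
  have h3 : F (1/2 - δ) < (1/2 - δ) * P + (1/2 + δ) * Q := by
    by_contra hcon
    push_neg at hcon
    have hle := hFle (1/2 - δ) ht2 a1
    have heq2 : F (1/2 - δ) = (1/2 - δ) * P + (1/2 + δ) * Q := by
      have : (1 : ℝ) - (1/2 - δ) = 1/2 + δ := by ring
      rw [this] at hle; linarith
    have hmidmem : ((1:ℝ)/2 + (1/2 - δ)) / 2 ∈ Set.Icc (0:ℝ) 1 := by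
      constructor <;> [linarith; linarith]
    have hs := hstrict (1/2) ht1 (1/2 - δ) ht2 hne12
    have hlemid := hFle _ hmidmem a1
    -- F mid ≤ mid * P + (1 - mid) * Q, mid = (1/2 + 1/2 - δ)/2
    linarith [hs, hlemid, ha1, heq2]
  -- strict gap 2 : F (1/2) < 1/2 R + 1/2 S
  have h4 : F (1/2) < 1/2 * R + 1/2 * S := by
    by_contra hcon
    push_neg at hcon
    have hle := hFle (1/2) ht1 a2
    have heq1 : F (1/2) = 1/2 * R + 1/2 * S := by
      have : (1 : ℝ) - 1/2 = 1/2 := by norm_num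
      rw [this] at hle; linarith
    have hmidmem : ((1:ℝ)/2 + (1/2 - δ)) / 2 ∈ Set.Icc (0:ℝ) 1 := by
      constructor <;> [linarith; linarith]
    have hs := hstrict (1/2) ht1 (1/2 - δ) ht2 hne12
    have hlemid := hFle _ hmidmem a2
    linarith [hs, hlemid, ha2, heq1]
  -- the mixable action
  obtain ⟨ahat, hahat⟩ := hmix a1 a2
  have h5 : F (1/2) ≤ 1/2 * (κ1 * P + (1 - κ1) * R) + 1/2 * (κ2 * Q + (1 - κ2) * S) := by
    have hle := hFle (1/2) ht1 ahat
    have hb1 := (hahat x1).1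
    have hb2 := (hahat x2).2
    linarith [hle, hb1, hb2]
  -- now the numeric contradiction
  set U : ℝ := P - R with hU
  set V : ℝ := Q - S with hV
  have e1 : F (1/2) = 1/2 * P + 1/2 * Q := by rw [ha1]; ring
  have e2 : F (1/2 - δ) = (1/2 - δ) * R + (1/2 + δ) * S := by rw [ha2]; ring
  have hA : 0 < (1/2 - δ) * U + (1/2 + δ) * V := by
    simp only [hU, hV]; linarith [h3, e2]
  have hB : U + V < 0 := by simp only [hU, hV]; linarith [h4, e1]
  have hC : (1 - κ1) * U + (1 - κ2) * V ≤ 0 := by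
    simp only [hU, hV]; linarith [h5, e1]
  have htpos : 0 < (κ1 - κ2) * (1/2 + δ) - 2 * δ * (1 - κ2) := by
    nlinarith [mul_pos hδpos hδpos, mul_pos hδpos hκ2,
      mul_nonneg (by linarith : (0:ℝ) ≤ κ1 - κ2 - 8*δ) hδpos.le]
  have hident : (κ1 - κ2) * ((1/2 - δ) * U + (1/2 + δ) * V)
      + 2 * δ * (-((1 - κ1) * U + (1 - κ2) * V))
      = ((κ1 - κ2) * (1/2 + δ) - 2 * δ * (1 - κ2)) * (U + V) := by ring
  have hLHS : 0 < (κ1 - κ2) * ((1/2 - δ) * U + (1/2 + δ) * V)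
      + 2 * δ * (-((1 - κ1) * U + (1 - κ2) * V)) := by
    have hp1 := mul_pos (by linarith : (0:ℝ) < κ1 - κ2) hA
    have hp2 := mul_nonneg (by linarith : (0:ℝ) ≤ 2*δ)
      (by linarith : (0:ℝ) ≤ -((1 - κ1) * U + (1 - κ2) * V))
    exact add_pos_of_pos_of_nonneg hp1 hp2
  have hRHS : ((κ1 - κ2) * (1/2 + δ) - 2 * δ * (1 - κ2)) * (U + V) < 0 :=
    mul_neg_of_pos_of_neg htpos hB
  rw [hident] at hLHS
  linarith


lemma ip_ite {Θ : Type*} [Fintype Θ] [DecidableEq Θ] (μ : Θ → ℝ) (hsum : ∑ θ, μ θ = 1)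
    (θ0 : Θ) (c d : ℝ) :
    ∑ θ, μ θ * (if θ = θ0 then c else d) = μ θ0 * c + (1 - μ θ0) * d := by
  have h1 : ∀ θ, μ θ * (if θ = θ0 then c else d)
      = μ θ * d + (if θ = θ0 then μ θ * (c - d) else 0) := by
    intro θ; split_ifs <;> ring
  rw [Finset.sum_congr rfl (fun θ _ => h1 θ), Finset.sum_add_distrib, ← Finset.sum_mul,
    hsum, Finset.sum_ite_eq' Finset.univ θ0 (fun θ => μ θ * (c - d))]
  simp only [Finset.mem_univ, if_true]
  ring


/-- If `Φ` fails strict convexity (two distinct relative-interior points with zero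
Bregman divergence), then no loss with attained strictly concave Bayes risk is
`η⁻¹Φ`-mixable for any `η > 0`. -/
theorem stmt_18 {Θ X 𝒜 : Type*} [Fintype Θ] [Nonempty Θ] [Fintype X] [Nonempty 𝒜]
    (hX : 2 ≤ Fintype.card X)
    (Φ : (Θ → ℝ) → ℝ)
    (hconv : ConvexOn ℝ (probSimplex Θ) Φ)
    (hlsc : LowerSemicontinuousOn Φ (probSimplex Θ))
    (g : (Θ → ℝ) → Θ → ℝ)
    (hg : ∀ μ ∈ probRelint Θ, HasFDerivAt Φ (pairCLM (g μ)) μ)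
    (μs μ'' : Θ → ℝ) (hμs : μs ∈ probRelint Θ) (hμ'' : μ'' ∈ probRelint Θ)
    (hne : μs ≠ μ'') (hD : breg Φ g μs μ'' = 0)
    (ℓ : 𝒜 → X → ℝ)
    (hatt : ∀ p ∈ probSimplex X, ∃ a : 𝒜, ∀ a' : 𝒜,
      ∑ x, p x * ℓ a x ≤ ∑ x, p x * ℓ a' x)
    (hL : StrictConcaveOn ℝ (probSimplex X) (fun p => ⨅ a : 𝒜, ∑ x, p x * ℓ a x))
    (η : ℝ) (hη : 0 < η) :
    ¬ (∀ A : Θ → 𝒜, ∀ μ ∈ probRelint Θ, ∃ ahat : 𝒜, ∀ x : X,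
        ℓ ahat x ≤ sInf ((fun μ' => ip μ' (fun θ => ℓ (A θ) x) + η⁻¹ * breg Φ g μ' μ) ''
          probSimplex Θ)) := by
  classical
  intro hmixAll
  have hθ0 : ∃ θ0, μs θ0 ≠ μ'' θ0 := by
    by_contra h; push_neg at h; exact hne (funext h)
  obtain ⟨θ0, hθ0⟩ := hθ0
  have hθ1 : ∃ θ1, θ1 ≠ θ0 := by
    by_contra h; push_neg at h
    apply hθ0
    have huniv : (Finset.univ : Finset Θ) = {θ0} := by
      ext θ; simp [h θ]
    have h1 : μs θ0 = 1 := by have := hμs.2; rwa [huniv, Finset.sum_singleton] at this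
    have h2 : μ'' θ0 = 1 := by have := hμ''.2; rwa [huniv, Finset.sum_singleton] at this
    rw [h1, h2]
  obtain ⟨θ1, hθ1⟩ := hθ1
  have hcoordlt : ∀ μ : Θ → ℝ, μ ∈ probRelint Θ → μ θ0 < 1 := by
    intro μ hμ
    have hsub : ({θ0, θ1} : Finset Θ) ⊆ Finset.univ := Finset.subset_univ _
    have hss := Finset.sum_le_sum_of_subset_of_nonneg hsub (fun i _ _ => (hμ.1 i).le)
    rw [Finset.sum_pair (Ne.symm hθ1)] at hss
    have h1 := hμ.1 θ1
    have h2 := hμ.2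
    linarith
  obtain ⟨x1, x2, hx⟩ := Fintype.exists_pair_of_one_lt_card (by omega : 1 < Fintype.card X)
  have hμsS := probRelint_subset hμs
  have hμ''S := probRelint_subset hμ''
  have hbregself : breg Φ g μ'' μ'' = 0 := breg_self Φ g μ''
  have hkey : ∀ a1 a2 : 𝒜, ∃ ahat : 𝒜, ∀ x : X,
      ℓ ahat x ≤ μs θ0 * ℓ a1 x + (1 - μs θ0) * ℓ a2 x ∧
      ℓ ahat x ≤ μ'' θ0 * ℓ a1 x + (1 - μ'' θ0) * ℓ a2 x := by
    intro a1 a2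
    obtain ⟨ahat, hahat⟩ := hmixAll (fun θ => if θ = θ0 then a1 else a2) μ'' hμ''
    refine ⟨ahat, fun x => ?_⟩
    have hbdd : BddBelow ((fun μ' => ip μ' (fun θ =>
        ℓ (if θ = θ0 then a1 else a2) x) + η⁻¹ * breg Φ g μ' μ'') '' probSimplex Θ) := by
      refine ⟨-(∑ θ, |ℓ (if θ = θ0 then a1 else a2) x|), ?_⟩
      rintro y ⟨μ', hμ', rfl⟩
      have h1 := ip_lower μ' (fun θ => ℓ (if θ = θ0 then a1 else a2) x) hμ'
      have h2 := breg_nonneg Φ g hconv μ'' hμ'' (hg μ'' hμ'') μ' hμ'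
      have h3 : 0 ≤ η⁻¹ * breg Φ g μ' μ'' := mul_nonneg (inv_nonneg.2 hη.le) h2
      simp only []
      linarith
    have hipA : ∀ μ : Θ → ℝ, (∑ θ, μ θ = 1) →
        ip μ (fun θ => ℓ (if θ = θ0 then a1 else a2) x)
          = μ θ0 * ℓ a1 x + (1 - μ θ0) * ℓ a2 x := by
      intro μ hsum
      rw [ip]
      have hcomm : ∀ θ : Θ, ℓ (if θ = θ0 then a1 else a2) x
          = if θ = θ0 then ℓ a1 x else ℓ a2 x := by
        intro θ; split_ifs <;> rfl
      rw [Finset.sum_congr rfl (fun θ _ => by rw [hcomm θ]), ip_ite μ hsum θ0]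
    have hs1 : ℓ ahat x ≤ μs θ0 * ℓ a1 x + (1 - μs θ0) * ℓ a2 x := by
      have hc := csInf_le hbdd ⟨μs, hμsS, rfl⟩
      have := (hahat x).trans hc
      simp only at this
      rwa [hD, hipA μs hμs.2, mul_zero, add_zero] at this
    have hs2 : ℓ ahat x ≤ μ'' θ0 * ℓ a1 x + (1 - μ'' θ0) * ℓ a2 x := by
      have hc := csInf_le hbdd ⟨μ'', hμ''S, rfl⟩
      have := (hahat x).trans hc
      simp only at this
      rwa [hbregself, hipA μ'' hμ''.2, mul_zero, add_zero] at this
    exact ⟨hs1, hs2⟩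
  rcases lt_or_gt_of_ne hθ0 with hcase | hcase
  · -- μs θ0 < μ'' θ0 : use κ1 = 1 - μs θ0, κ2 = 1 - μ'' θ0, swap acts
    exact keylemma x1 x2 hx ℓ hatt hL (1 - μs θ0) (1 - μ'' θ0)
      (by linarith [hcoordlt μ'' hμ'']) (by linarith [hμs.1 θ0]) (by linarith)
      (fun a1 a2 => by
        obtain ⟨ahat, hh⟩ := hkey a2 a1
        exact ⟨ahat, fun x => ⟨by linarith [(hh x).1], by linarith [(hh x).2]⟩⟩)
  · -- μ'' θ0 < μs θ0
    exact keylemma x1 x2 hx ℓ hatt hL (μs θ0) (μ'' θ0)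
      (hμ''.1 θ0) (hcoordlt μs hμs) hcase
      (fun a1 a2 => by
        obtain ⟨ahat, hh⟩ := hkey a1 a2
        exact ⟨ahat, fun x => ⟨(hh x).1, (hh x).2⟩⟩)
end
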